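/- Let H be a graph on h vertices and let G be an H-topological-minor-free finite simple graph together with a downwards well-linked rooted superbranch decomposition T = (T, L) of the support hypergraph H(G) with root r. Then every hyperedge e ∈ E(torso(r)) with |V(e)| ≥ h has multiplicity less than h(h−1)/2 in torso(r). -/

import Mathlib

open scoped Classical

namespace Paper

variable {V : Type} {E : Type}

/-- Vertices covered by a set of hyperedges. -/
noncomputable def Vs (F : E → Finset V) (A : Finset E) : Finset V := A.biUnion F

/-- Boundary of `A` relative to a ground set of hyperedges. -/
noncomputable def bdIn (F : E → Finset V) (ground A : Finset E) : Finset V :=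
  Vs F A ∩ Vs F (ground \ A)

/-- Boundary size. -/
noncomputable def lamIn (F : E → Finset V) (ground A : Finset E) : ℕ :=
  (bdIn F ground A).card

/-- Interior. -/
noncomputable def intIn (F : E → Finset V) (ground A : Finset E) : Finset V :=
  Vs F A \ bdIn F ground A

/-- A set of hyperedges is well-linked. -/
def WellLinkedIn (F : E → Finset V) (ground A : Finset E) : Prop :=
  ∀ A1 A2 : Finset E, A1 ∪ A2 = A → A1 ∩ A2 = ∅ →
    lamIn F ground A ≤ lamIn F ground A1 ∨ lamIn F ground A ≤ lamIn F ground A2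

/-- A nonempty set of hyperedges is internally connected. -/
def InternallyConnectedIn (F : E → Finset V) (ground A : Finset E) : Prop :=
  A.Nonempty ∧ ¬ ∃ B1 B2 : Finset E, B1 ∪ B2 = A ∧ B1 ∩ B2 = ∅ ∧
    B1.Nonempty ∧ B2.Nonempty ∧
    bdIn F ground B1 ⊆ bdIn F ground A ∧ bdIn F ground B2 ⊆ bdIn F ground A

/-- Internal component: an inclusion-maximal internally connected subset. -/
def InternalComponentIn (F : E → Finset V) (ground B B' : Finset E) : Prop :=
  B' ⊆ B ∧ InternallyConnectedIn F ground B' ∧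
    ∀ B'' : Finset E, B' ⊆ B'' → B'' ⊆ B → InternallyConnectedIn F ground B'' → B'' = B'

/-- A tree decomposition of the graph with adjacency `Adj` induced on vertex set `s`. -/
structure TreeDecompOn (Adj : V → V → Prop) (s : Finset V) where
  ι : Type
  fin : Fintype ι
  tr : SimpleGraph ι
  isTree : tr.IsTree
  bag : ι → Finset V
  bag_sub : ∀ i, bag i ⊆ s
  cover_v : ∀ v ∈ s, ∃ i, v ∈ bag i
  cover_e : ∀ u ∈ s, ∀ v ∈ s, Adj u v → ∃ i, u ∈ bag i ∧ v ∈ bag i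
  conn : ∀ v ∈ s, (tr.induce {i | v ∈ bag i}).Connected

/-- Treewidth (an integer, `-1` for the empty graph) of the graph
with adjacency `Adj` induced on the vertex set `s`. -/
noncomputable def tw (Adj : V → V → Prop) (s : Finset V) : ℤ :=
  sInf {k : ℤ | ∃ D : TreeDecompOn Adj s, ∀ i, ((D.bag i).card : ℤ) ≤ k + 1}

/-- Minimum size of a treewidth-`η`-modulator of the graph induced on `s`. -/
noncomputable def twmodOn (Adj : V → V → Prop) (s : Finset V) (η : ℕ) : ℕ :=
  sInf {n : ℕ | ∃ X : Finset V, X ⊆ s ∧ X.card ≤ n ∧ tw Adj (s \ X) ≤ (η : ℤ)}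

/-- Adjacency of the primal graph of a hypergraph. -/
def primalAdj (F : E → Finset V) : V → V → Prop :=
  fun u v => u ≠ v ∧ ∃ e : E, u ∈ F e ∧ v ∈ F e

/-- Internal treewidth of a set of hyperedges. -/
noncomputable def itw [Fintype E] (F : E → Finset V) (A : Finset E) : ℤ :=
  tw (primalAdj F) (intIn F Finset.univ A)

/-- The hypergraph given by `F` is (isomorphic to) the support hypergraph of `G`:
it has exactly one hyperedge `{v}` for each vertex `v` and exactly one hyperedge
`{u, v}` for each edge `uv`, and no other hyperedges. -/
def IsSupport (G : SimpleGraph V) (F : E → Finset V) : Prop :=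
  (∀ e : E, (∃ v : V, F e = {v}) ∨ (∃ u v : V, G.Adj u v ∧ F e = {u, v})) ∧
  (∀ v : V, ∃! e : E, F e = {v}) ∧
  (∀ u v : V, G.Adj u v → ∃! e : E, F e = ({u, v} : Finset V))

/-- `H` is a topological minor of `G` using only vertices in `s`. -/
def IsTopMinorOn {α β : Type} (H : SimpleGraph α) (G : SimpleGraph β) (s : Set β) : Prop :=
  ∃ φ : α → β, (∀ a, φ a ∈ s) ∧ Function.Injective φ ∧
    ∃ P : ∀ u v : α, H.Adj u v → G.Walk (φ u) (φ v),
      (∀ u v (h : H.Adj u v), (P u v h).IsPath) ∧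
      (∀ u v (h : H.Adj u v), ∀ w ∈ (P u v h).support, w ∈ s) ∧
      (∀ u v (h : H.Adj u v) (w : β), w ∈ (P u v h).support → w ≠ φ u → w ≠ φ v →
        ∀ a : α, φ a ≠ w) ∧
      (∀ u v u' v' (h : H.Adj u v) (h' : H.Adj u' v'),
        (s(u, v) : Sym2 α) ≠ s(u', v') →
        ∀ w : β, w ∈ (P u v h).support → w ∈ (P u' v' h').support → w = φ u ∨ w = φ v)

/-- `H` is a topological minor of `G`. -/
def IsTopMinor {α β : Type} (H : SimpleGraph α) (G : SimpleGraph β) : Prop :=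
  IsTopMinorOn H G Set.univ

/-- A rooted superbranch decomposition of a hypergraph with hyperedge type `E`:
a finite rooted tree (given by a parent map) whose leaves are in bijection with `E`
and in which every non-leaf node has at least two children. -/
structure SBD (E : Type) [Fintype E] where
  ι : Type
  fin : Fintype ι
  root : ι
  par : ι → ι
  par_root : par root = root
  reach : ∀ i : ι, ∃ n : ℕ, par^[n] i = root
  leafMap : E → ι
  inj : Function.Injective leafMap
  map_leaf : ∀ (e : E) (j : ι), par j = leafMap e → j = leafMap e
  leaf_surj : ∀ i : ι, (∀ j : ι, par j = i → j = i) → ∃ e : E, leafMap e = i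
  branch : ∀ i : ι, (∃ j : ι, par j = i ∧ j ≠ i) → 2 ≤ {j : ι | par j = i ∧ j ≠ i}.ncard

/-- The set `L[t]` of hyperedges assigned to leaves below `t`. -/
noncomputable def SBD.Lset [Fintype E] (T : SBD E) (t : T.ι) : Finset E :=
  Finset.univ.filter fun e => ∃ n : ℕ, T.par^[n] (T.leafMap e) = t

/-- The children of the root. -/
noncomputable def SBD.chd [Fintype E] (T : SBD E) : Finset T.ι :=
  letI := T.fin
  Finset.univ.filter fun j => T.par j = T.root ∧ j ≠ T.root

/-- The vertex sets of the hyperedges of the torso of the root: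
the hyperedge corresponding to a child `t` has vertex set `bd(L[t])`. -/
noncomputable def SBD.Ft [Fintype E] (T : SBD E) (F : E → Finset V) : T.ι → Finset V :=
  fun t => bdIn F Finset.univ (T.Lset t)

/-- Downwards well-linkedness of a superbranch decomposition. -/
def DownWL [Fintype E] (F : E → Finset V) (T : SBD E) : Prop :=
  ∀ t : T.ι, WellLinkedIn F Finset.univ (T.Lset t)

/-- The adhesion size of the superbranch decomposition is at most `α`. -/
def AdhLE [Fintype E] (F : E → Finset V) (T : SBD E) (α : ℕ) : Prop :=
  ∀ t : T.ι, t ≠ T.root → lamIn F Finset.univ (T.Lset t) ≤ α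

/-- A rooted tree decomposition (given by a root and a tree decomposition). -/
structure RTreeDecompOn (Adj : V → V → Prop) (s : Finset V) extends TreeDecompOn Adj s where
  root : ι

/-- A `(k, c)`-protrusion decomposition exists. -/
def HasProtrusionDecomp (Adj : V → V → Prop) (s : Finset V) (k : ℝ) (c : ℕ) : Prop :=
  ∃ D : RTreeDecompOn Adj s,
    ((D.bag D.root).card : ℝ) ≤ k ∧
    ((D.tr.neighborSet D.root).ncard : ℝ) ≤ k ∧
    ∀ i, i ≠ D.root → (D.bag i).card ≤ c

/-- A finite simple graph on the vertex universe `ℕ`. -/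
structure FGraph where
  verts : Finset ℕ
  Adj : ℕ → ℕ → Prop
  symm : ∀ u v, Adj u v → Adj v u
  loopless : ∀ u, ¬ Adj u u
  supp : ∀ u v, Adj u v → u ∈ verts ∧ v ∈ verts

/-- The `SimpleGraph` of an `FGraph`. -/
def FGraph.toSG (G : FGraph) : SimpleGraph ℕ where
  Adj := G.Adj
  symm := ⟨fun u v h => G.symm u v h⟩
  loopless := ⟨fun u h => G.loopless u h⟩

/-- A rooted tree decomposition, with the rooted tree given by a parent map and
connectivity phrased for rooted trees. -/
structure RootedTD (Adj : V → V → Prop) (s : Finset V) where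
  ι : Type
  fin : Fintype ι
  root : ι
  par : ι → ι
  par_root : par root = root
  reach : ∀ i : ι, ∃ n : ℕ, par^[n] i = root
  bag : ι → Finset V
  bag_sub : ∀ i, bag i ⊆ s
  cover_v : ∀ v ∈ s, ∃ i, v ∈ bag i
  cover_e : ∀ u ∈ s, ∀ v ∈ s, Adj u v → ∃ i, u ∈ bag i ∧ v ∈ bag i
  conn : ∀ v ∈ s, ∃ m : ι, v ∈ bag m ∧ ∀ i : ι, v ∈ bag i →
    ∃ n : ℕ, par^[n] i = m ∧ ∀ l ≤ n, v ∈ bag (par^[l] i)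


/-! ### Auxiliary lemmas for `statement7` -/

lemma mem_Vs {F : E → Finset V} {A : Finset E} {x : V} :
    x ∈ Vs F A ↔ ∃ e ∈ A, x ∈ F e := Finset.mem_biUnion

lemma Vs_mono (F : E → Finset V) {A B : Finset E} (h : A ⊆ B) : Vs F A ⊆ Vs F B :=
  Finset.biUnion_subset_biUnion_of_subset_left _ h

/-- In a well-linked set, any two boundary vertices are connected by a path of the
graph whose internal vertices lie in the interior. -/
lemma wl_connect [Fintype E] (G : SimpleGraph V) (F : E → Finset V)
    (hF : ∀ e : E, (∃ v : V, F e = {v}) ∨ (∃ a b : V, G.Adj a b ∧ F e = {a, b}))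
    (A : Finset E) (hwlA : WellLinkedIn F Finset.univ A)
    {u v : V} (hu : u ∈ bdIn F Finset.univ A) (hv : v ∈ bdIn F Finset.univ A)
    (huv : u ≠ v) :
    ∃ p : G.Walk u v, p.IsPath ∧
      ∀ w ∈ p.support, w = u ∨ w = v ∨ w ∈ intIn F Finset.univ A := by
  classical
  set K : Set V := (↑(intIn F Finset.univ A) : Set V) ∪ {u, v} with hK
  have huK : u ∈ K := Or.inr (Or.inl rfl)
  let G' : SimpleGraph V :=
    { Adj := fun x y => x ≠ y ∧ x ∈ K ∧ y ∈ K ∧ ∃ e ∈ A, x ∈ F e ∧ y ∈ F e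
      symm := ⟨by rintro x y ⟨h1, h2, h3, e, he, hx, hy⟩; exact ⟨h1.symm, h3, h2, e, he, hy, hx⟩⟩
      loopless := ⟨fun x h => h.1 rfl⟩ }
  have hsupK : ∀ {a b : V} (p : G'.Walk a b), a ∈ K → ∀ w ∈ p.support, w ∈ K := by
    intro a b p
    induction p with
    | nil => intro ha w hw; rw [SimpleGraph.Walk.support_nil, List.mem_singleton] at hw; exact hw ▸ ha
    | cons h q ih =>
      intro ha w hw
      rw [SimpleGraph.Walk.support_cons, List.mem_cons] at hw
      rcases hw with rfl | hw
      · exact ha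
      · exact ih h.2.2.1 w hw
  -- main claim: u and v are connected in G'
  have hreach : G'.Reachable u v := by
    by_contra hnr
    set C : Set V := {x : V | G'.Reachable u x} with hC
    have huC : u ∈ C := SimpleGraph.Reachable.refl u
    have hvC : v ∉ C := hnr
    have hCsubK : ∀ x ∈ C, x ∈ K := by
      rintro x hx
      obtain ⟨p⟩ := hx
      exact hsupK p huK x (SimpleGraph.Walk.end_mem_support p)
    set A1 : Finset E := A.filter (fun e => ∃ x ∈ F e, x ∈ C) with hA1
    set A2 : Finset E := A.filter (fun e => ¬ ∃ x ∈ F e, x ∈ C) with hA2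
    have hkey : ∀ w ∈ Vs F A1, w ∉ C → w ∈ bdIn F Finset.univ A ∧ w ≠ v := by
      intro w hw hwC
      obtain ⟨e, heA1, hwe⟩ := mem_Vs.mp hw
      obtain ⟨heA, x, hxe, hxC⟩ := Finset.mem_filter.mp heA1
      have hwx : w ≠ x := fun h => hwC (h ▸ hxC)
      have hwK : w ∉ K := by
        intro hK'
        exact hwC (hxC.trans (SimpleGraph.Adj.reachable
          (⟨hwx.symm, hCsubK x hxC, hK', e, heA, hxe, hwe⟩ : G'.Adj x w)))
      have hwVA : w ∈ Vs F A := mem_Vs.mpr ⟨e, heA, hwe⟩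
      have hwbd : w ∈ bdIn F Finset.univ A := by
        by_contra hb
        exact hwK (Or.inl (Finset.mem_coe.mpr (Finset.mem_sdiff.mpr ⟨hwVA, hb⟩)))
      exact ⟨hwbd, fun h => hwK (h ▸ Or.inr (Or.inr rfl))⟩
    have hbd1 : bdIn F Finset.univ A1 ⊆ (bdIn F Finset.univ A).erase v := by
      intro w hw
      obtain ⟨hw1, hw2⟩ := Finset.mem_inter.mp hw
      by_cases hwC : w ∈ C
      · obtain ⟨e', he', hwe'⟩ := mem_Vs.mp hw2
        have he'A1 : e' ∉ A1 := (Finset.mem_sdiff.mp he').2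
        have he'A : e' ∉ A := fun h => he'A1 (Finset.mem_filter.mpr ⟨h, w, hwe', hwC⟩)
        have hwbd : w ∈ bdIn F Finset.univ A := Finset.mem_inter.mpr
          ⟨Vs_mono F (Finset.filter_subset _ _) hw1,
           mem_Vs.mpr ⟨e', Finset.mem_sdiff.mpr ⟨Finset.mem_univ _, he'A⟩, hwe'⟩⟩
        exact Finset.mem_erase.mpr ⟨fun h => hvC (h ▸ hwC), hwbd⟩
      · obtain ⟨hwbd, hwv⟩ := hkey w hw1 hwC
        exact Finset.mem_erase.mpr ⟨hwv, hwbd⟩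
    have hbd2 : bdIn F Finset.univ A2 ⊆ (bdIn F Finset.univ A).erase u := by
      intro w hw
      obtain ⟨hw1, hw2⟩ := Finset.mem_inter.mp hw
      have hwC : w ∉ C := by
        obtain ⟨e, heA2, hwe⟩ := mem_Vs.mp hw1
        obtain ⟨heA, hpred⟩ := Finset.mem_filter.mp heA2
        exact fun h => hpred ⟨w, hwe, h⟩
      have hwu : w ≠ u := fun h => hwC (h ▸ huC)
      obtain ⟨e', he', hwe'⟩ := mem_Vs.mp hw2
      have he'A2 : e' ∉ A2 := (Finset.mem_sdiff.mp he').2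
      by_cases he'A : e' ∈ A
      · have he'A1 : e' ∈ A1 := by
          by_contra hne
          exact he'A2 (Finset.mem_filter.mpr
            ⟨he'A, fun hex => hne (Finset.mem_filter.mpr ⟨he'A, hex⟩)⟩)
        exact Finset.mem_erase.mpr ⟨hwu, (hkey w (mem_Vs.mpr ⟨e', he'A1, hwe'⟩) hwC).1⟩
      · exact Finset.mem_erase.mpr ⟨hwu,
          Finset.mem_inter.mpr ⟨Vs_mono F (Finset.filter_subset _ _) hw1,
            mem_Vs.mpr ⟨e', Finset.mem_sdiff.mpr ⟨Finset.mem_univ _, he'A⟩, hwe'⟩⟩⟩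
    have hvbd : v ∈ bdIn F Finset.univ A := hv
    have hubd : u ∈ bdIn F Finset.univ A := hu
    have hcard : 0 < (bdIn F Finset.univ A).card := Finset.card_pos.mpr ⟨v, hvbd⟩
    have hc1 : lamIn F Finset.univ A1 < lamIn F Finset.univ A := by
      have := Finset.card_le_card hbd1
      rw [Finset.card_erase_of_mem hvbd] at this
      unfold lamIn; omega
    have hc2 : lamIn F Finset.univ A2 < lamIn F Finset.univ A := by
      have := Finset.card_le_card hbd2
      rw [Finset.card_erase_of_mem hubd] at this
      unfold lamIn; omega
    have hunion : A1 ∪ A2 = A := Finset.filter_union_filter_not_eq _ A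
    have hinter : A1 ∩ A2 = ∅ :=
      Finset.disjoint_iff_inter_eq_empty.mp (Finset.disjoint_filter_filter_not A A _)
    rcases hwlA A1 A2 hunion hinter with h | h
    · omega
    · omega
  -- convert the G'-walk into a G-walk
  have hle : ∀ {x y : V}, G'.Adj x y → G.Adj x y := by
    rintro x y ⟨hne, _, _, e, heA, hxe, hye⟩
    rcases hF e with ⟨a, ha⟩ | ⟨a, b, hab, ha⟩
    · rw [ha, Finset.mem_singleton] at hxe hye
      exact absurd (hxe.trans hye.symm) hne
    · rw [ha, Finset.mem_insert, Finset.mem_singleton] at hxe hye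
      rcases hxe with rfl | rfl <;> rcases hye with rfl | rfl
      · exact absurd rfl hne
      · exact hab
      · exact hab.symm
      · exact absurd rfl hne
  have conv : ∀ {a b : V} (p : G'.Walk a b), ∃ q : G.Walk a b, q.support = p.support := by
    intro a b p
    induction p with
    | nil => exact ⟨SimpleGraph.Walk.nil, rfl⟩
    | cons h q ih =>
      obtain ⟨q', hq'⟩ := ih
      exact ⟨SimpleGraph.Walk.cons (hle h) q', by
        rw [SimpleGraph.Walk.support_cons, SimpleGraph.Walk.support_cons, hq']⟩
  obtain ⟨p0⟩ := hreach
  obtain ⟨p1, hp1⟩ := conv p0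
  refine ⟨p1.bypass, SimpleGraph.Walk.bypass_isPath p1, ?_⟩
  intro w hw
  have hwK : w ∈ K := by
    have := SimpleGraph.Walk.support_bypass_subset p1 hw
    rw [hp1] at this
    exact hsupK p0 huK w this
  rcases hwK with h | h
  · exact Or.inr (Or.inr (Finset.mem_coe.mp h))
  · rcases h with h | h
    · exact Or.inl h
    · exact Or.inr (Or.inl h)


lemma lset_disj [Fintype E] (T : SBD E) {c c' : T.ι}
    (hc : c ∈ T.chd) (hc' : c' ∈ T.chd) (hne : c ≠ c') :
    Disjoint (T.Lset c) (T.Lset c') := by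
  classical
  letI := T.fin
  simp only [SBD.chd, Finset.mem_filter, Finset.mem_univ, true_and] at hc hc'
  rw [Finset.disjoint_left]
  intro e he he'
  simp only [SBD.Lset, Finset.mem_filter, Finset.mem_univ, true_and] at he he'
  obtain ⟨n, hn⟩ := he
  obtain ⟨m, hm⟩ := he'
  have main : ∀ (a b : T.ι) (n m : ℕ), n ≤ m → T.par a = T.root → b ≠ T.root → a ≠ b →
      T.par^[n] (T.leafMap e) = a → T.par^[m] (T.leafMap e) = b → False := by
    intro a b n m hnm ha hbr hab hn hm
    obtain ⟨k, rfl⟩ : ∃ k, m = k + n := ⟨m - n, by omega⟩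
    rw [Function.iterate_add_apply, hn] at hm
    cases k with
    | zero => exact hab hm
    | succ j =>
      rw [Function.iterate_succ_apply, ha, Function.iterate_fixed T.par_root j] at hm
      exact hbr hm.symm
  rcases le_total n m with h | h
  · exact main c c' n m h hc.1 hc'.2 hne hn hm
  · exact main c' c m n h hc'.1 hc.2 hne.symm hm hn

lemma int_disj [Fintype E] {F : E → Finset V} {A A' : Finset E} (hd : Disjoint A A')
    {x : V} (hx : x ∈ intIn F Finset.univ A) : x ∉ Vs F A' := by
  intro hx'
  obtain ⟨hxV, hxnb⟩ := Finset.mem_sdiff.mp hx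
  obtain ⟨e, heA', hxe⟩ := mem_Vs.mp hx'
  exact hxnb (Finset.mem_inter.mpr ⟨hxV, mem_Vs.mpr
    ⟨e, Finset.mem_sdiff.mpr ⟨Finset.mem_univ _, Finset.disjoint_right.mp hd heA'⟩, hxe⟩⟩)


/-- hyperedges of the root torso of rank at least `|V(H)|` have
multiplicity less than `|V(H)| * (|V(H)| - 1) / 2`. -/
theorem statement7 {W V E : Type} [Fintype W] [Fintype V] [Fintype E]
    (H : SimpleGraph W) (G : SimpleGraph V) (F : E → Finset V)
    (hF : IsSupport G F) (hfree : ¬ IsTopMinor H G)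
    (T : SBD E) (hwl : DownWL F T)
    (s : T.ι) (hs : s ∈ T.chd) (hrank : Fintype.card W ≤ (T.Ft F s).card) :
    (T.chd.filter fun s' => T.Ft F s' = T.Ft F s).card <
      Fintype.card W * (Fintype.card W - 1) / 2 := by
  classical
  letI := T.fin
  by_contra hcon
  push_neg at hcon
  set B : Finset V := T.Ft F s with hB
  set CH : Finset T.ι := T.chd.filter (fun s' => T.Ft F s' = T.Ft F s) with hCH
  -- the injection of the vertices of H into B
  have hWB : Fintype.card W ≤ Fintype.card {x // x ∈ B} := by
    rw [Fintype.card_coe]; exact hrank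
  obtain ⟨f⟩ := Function.Embedding.nonempty_of_card_le hWB
  set φ : W → V := fun w => (f w : V) with hφ
  have hφinj : Function.Injective φ := fun a b hab => f.injective (Subtype.ext hab)
  have hφB : ∀ w : W, φ w ∈ B := fun w => (f w).2
  -- the injection of the non-diagonal pairs into CH
  have hσcard : Fintype.card {p : Sym2 W // ¬ p.IsDiag} ≤ Fintype.card {x // x ∈ CH} := by
    rw [Sym2.card_subtype_not_diag, Nat.choose_two_right, Fintype.card_coe]
    exact hcon
  obtain ⟨ψ⟩ := Function.Embedding.nonempty_of_card_le hσcard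
  have hchd : ∀ q : {p : Sym2 W // ¬ p.IsDiag}, (ψ q : T.ι) ∈ T.chd :=
    fun q => (Finset.mem_filter.mp (ψ q).2).1
  have hbdc : ∀ q : {p : Sym2 W // ¬ p.IsDiag},
      bdIn F Finset.univ (T.Lset (ψ q : T.ι)) = B :=
    fun q => (Finset.mem_filter.mp (ψ q).2).2
  -- per-pair paths
  have key : ∀ (u v : W) (h : H.Adj u v), ∃ p : G.Walk (φ u) (φ v), p.IsPath ∧
      ∀ w ∈ p.support, w = φ u ∨ w = φ v ∨ w ∈ intIn F Finset.univ
        (T.Lset (ψ ⟨s(u, v), fun hd => h.ne (Sym2.mk_isDiag_iff.mp hd)⟩ : T.ι)) := by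
    intro u v h
    set q : {p : Sym2 W // ¬ p.IsDiag} := ⟨s(u, v), fun hd => h.ne (Sym2.mk_isDiag_iff.mp hd)⟩
    have hu : φ u ∈ bdIn F Finset.univ (T.Lset (ψ q : T.ι)) := by rw [hbdc q]; exact hφB u
    have hv : φ v ∈ bdIn F Finset.univ (T.Lset (ψ q : T.ι)) := by rw [hbdc q]; exact hφB v
    exact wl_connect G F hF.1 _ (hwl _) hu hv (fun heq => h.ne (hφinj heq))
  choose P hP1 hP2 using key
  refine hfree ⟨φ, fun a => Set.mem_univ _, hφinj, P, hP1, fun u v h w _ => Set.mem_univ _,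
    ?_, ?_⟩
  · -- internal vertices of paths avoid the image of φ
    intro u v h w hw hwu hwv a
    rcases hP2 u v h w hw with rfl | rfl | hwint
    · exact absurd rfl hwu
    · exact absurd rfl hwv
    · intro heq
      have : φ a ∈ bdIn F Finset.univ
          (T.Lset (ψ ⟨s(u, v), fun hd => h.ne (Sym2.mk_isDiag_iff.mp hd)⟩ : T.ι)) := by
        rw [hbdc]; exact hφB a
      rw [heq] at this
      exact (Finset.mem_sdiff.mp hwint).2 this
  · -- paths for distinct pairs intersect only at endpoints
    intro u v u' v' h h' hne w hw hw'
    set q : {p : Sym2 W // ¬ p.IsDiag} := ⟨s(u, v), fun hd => h.ne (Sym2.mk_isDiag_iff.mp hd)⟩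
    set q' : {p : Sym2 W // ¬ p.IsDiag} :=
      ⟨s(u', v'), fun hd => h'.ne (Sym2.mk_isDiag_iff.mp hd)⟩
    have hqq' : (ψ q : T.ι) ≠ (ψ q' : T.ι) := by
      intro hval
      exact hne (congrArg Subtype.val (ψ.injective (Subtype.ext hval)))
    have hdis : Disjoint (T.Lset (ψ q : T.ι)) (T.Lset (ψ q' : T.ι)) :=
      lset_disj T (hchd q) (hchd q') hqq'
    rcases hP2 u v h w hw with rfl | rfl | hwint
    · exact Or.inl rfl
    · exact Or.inr rfl
    · exfalso
      have hwnot : w ∉ Vs F (T.Lset (ψ q' : T.ι)) := int_disj hdis hwint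
      have hBsub : B ⊆ Vs F (T.Lset (ψ q' : T.ι)) := by
        rw [← hbdc q']; exact Finset.inter_subset_left
      rcases hP2 u' v' h' w hw' with rfl | rfl | hwint'
      · exact hwnot (hBsub (hφB u'))
      · exact hwnot (hBsub (hφB v'))
      · exact hwnot (Finset.sdiff_subset hwint')


end Paper
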